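/- Let W be the (2,2)-homogeneous tree: every vertex has exactly two incident edges that increase height by 1 and exactly two that decrease height by 1. For every β with 0 < β ≤ 1 and every vertex w₀, there exists a line r : ℤ → W (an injective map with r(n) adjacent to r(n+1) for all n) passing through w₀ such that for all integers m, n, |h(r(m), r(n)) − β|m − n|| ≤ 2, i.e., r has 2-coarse slope β. -/
import Mathlib

open SimpleGraph

private lemma tree_isPath_concat {W : Type*} {G : SimpleGraph W} {a v w : W}
    {p : G.Walk a v} (hp : p.IsPath) (hvw : G.Adj v w) (hw : w ∉ p.support) :
    (p.concat hvw).IsPath := by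
  rw [← SimpleGraph.Walk.isPath_reverse_iff, SimpleGraph.Walk.reverse_concat]
  exact hp.reverse.cons (by simpa using hw)

private lemma tree_mem_support_dist_le {W : Type*} {G : SimpleGraph W} {a v w : W}
    {p : G.Walk a v} (hw : w ∈ p.support) :
    G.dist a w + G.dist w v ≤ p.length := by
  classical
  have hsplit := p.take_spec hw
  have hlen : (p.takeUntil w hw).length + (p.dropUntil w hw).length = p.length := by
    rw [← SimpleGraph.Walk.length_append, hsplit]
  have h1 := G.dist_le (p.takeUntil w hw)
  have h2 := G.dist_le (p.dropUntil w hw)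
  omega

private lemma tree_dist_adj {W : Type*} {G : SimpleGraph W} (hG : G.IsTree) (a v w : W)
    (hvw : G.Adj v w) : G.dist a w = G.dist a v + 1 ∨ G.dist a w + 1 = G.dist a v := by
  have hpu := SimpleGraph.isAcyclic_iff_path_unique.mp hG.2
  obtain ⟨p, hp, hpl⟩ := hG.1.exists_path_of_dist a v
  obtain ⟨q, hq, hql⟩ := hG.1.exists_path_of_dist a w
  have hle1 : G.dist a w ≤ G.dist a v + 1 := by
    have := G.dist_le (p.concat hvw)
    rwa [SimpleGraph.Walk.length_concat, hpl] at this
  have hle2 : G.dist a v ≤ G.dist a w + 1 := by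
    have := G.dist_le (q.concat hvw.symm)
    rwa [SimpleGraph.Walk.length_concat, hql] at this
  have hne : G.dist a w ≠ G.dist a v := by
    intro heq
    by_cases hmem : w ∈ p.support
    · have h1 := tree_mem_support_dist_le hmem
      have h2 : 1 ≤ G.dist w v := by
        have hne0 : G.dist w v ≠ 0 := fun hc0 =>
          hvw.ne ((hG.1.dist_eq_zero_iff).mp hc0).symm
        omega
      omega
    · have hpath := tree_isPath_concat hp hvw hmem
      have heqw : q = p.concat hvw := Subtype.mk_eq_mk.mp (hpu ⟨q, hq⟩ ⟨p.concat hvw, hpath⟩)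
      have hlens : q.length = (p.concat hvw).length := by rw [heqw]
      rw [SimpleGraph.Walk.length_concat, hpl, hql] at hlens
      omega
  omega

private lemma tree_unique_closer {W : Type*} {G : SimpleGraph W} (hG : G.IsTree)
    (a v b b' : W) (hb : G.Adj b v) (hb' : G.Adj b' v)
    (hd : G.dist a b + 1 = G.dist a v) (hd' : G.dist a b' + 1 = G.dist a v) : b = b' := by
  classical
  have hpu := SimpleGraph.isAcyclic_iff_path_unique.mp hG.2
  obtain ⟨p, hp, hpl⟩ := hG.1.exists_path_of_dist a b
  obtain ⟨p', hp', hpl'⟩ := hG.1.exists_path_of_dist a b'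
  have hvp : v ∉ p.support := by
    intro hmem
    have h1 := tree_mem_support_dist_le hmem
    have h2 := G.dist_le (p.takeUntil v hmem)
    omega
  have hvp' : v ∉ p'.support := by
    intro hmem
    have h1 := tree_mem_support_dist_le hmem
    omega
  have hpath := tree_isPath_concat hp hb hvp
  have hpath' := tree_isPath_concat hp' hb' hvp'
  have heq : p.concat hb = p'.concat hb' :=
    Subtype.mk_eq_mk.mp (hpu ⟨p.concat hb, hpath⟩ ⟨p'.concat hb', hpath'⟩)
  obtain ⟨hbv, -⟩ := SimpleGraph.Walk.concat_inj heq
  exact hbv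

private lemma tree_injective_of_nonback {W : Type*} {G : SimpleGraph W} (hG : G.IsTree)
    (r : ℤ → W) (hadj : ∀ n : ℤ, G.Adj (r n) (r (n + 1)))
    (hnb : ∀ n : ℤ, r (n + 2) ≠ r n) : Function.Injective r := by
  have key : ∀ k : ℕ, ∀ a : ℤ, G.dist (r a) (r (a + k)) = k := by
    intro k
    induction k using Nat.strong_induction_on with
    | _ k ih =>
      match k with
      | 0 => intro a; simpa using G.dist_self
      | 1 => intro a
             rw [SimpleGraph.dist_eq_one_iff_adj]
             exact_mod_cast hadj a
      | (k + 2) =>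
        intro a
        have e1 : (a + (↑k+1) + 1 : ℤ) = a + (↑(k+1)+1) := by push_cast; ring
        have e1' : (a + (↑(k+1)+1) : ℤ) = a + ↑(k+2) := by push_cast; ring
        have e2 : (a + ↑k + 1 : ℤ) = a + (↑k+1) := by ring
        have e2' : (a + (↑k+1) : ℤ) = a + ↑(k+1) := by push_cast; ring
        have e3 : (a + ↑k + 2 : ℤ) = a + ↑(k+2) := by push_cast; ring
        have h1 : G.dist (r a) (r (a + ↑(k + 1))) = k + 1 := ih (k+1) (by omega) a
        have h0 : G.dist (r a) (r (a + ↑k)) = k := ih k (by omega) a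
        have hA : G.Adj (r (a + ↑(k+1))) (r (a + ↑(k+2))) := by
          have := hadj (a + (↑k+1)); rw [e1, e1'] at this; rwa [e2'] at this
        have hB : G.Adj (r (a + ↑k)) (r (a + ↑(k+1))) := by
          have := hadj (a + ↑k); rwa [e2, e2'] at this
        rcases tree_dist_adj hG (r a) (r (a + ↑(k+1))) (r (a + ↑(k+2))) hA with hs | hs
        · rw [h1] at hs; exact hs
        · exfalso
          rw [h1] at hs
          have heq := tree_unique_closer hG (r a) (r (a + ↑(k+1))) (r (a + ↑(k+2))) (r (a + ↑k))
            hA.symm hB (by omega) (by omega)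
          exact hnb (a + ↑k) (by rw [e3, heq])
  intro m n hmn
  by_contra hne
  wlog hlt : m < n generalizing m n
  · exact this hmn.symm (Ne.symm hne) (by omega)
  have : G.dist (r m) (r (m + ((n - m).toNat : ℤ))) = (n-m).toNat := key (n-m).toNat m
  rw [Int.toNat_of_nonneg (by omega)] at this
  have h2 : m + (n - m) = n := by ring
  rw [h2, hmn] at this
  rw [G.dist_self] at this
  omega

/-- In the (2,2)-homogeneous tree, through any vertex there is a line of 2-coarse slope β
for any 0 < β ≤ 1. -/
theorem line_of_coarse_slope_in_22_tree {W : Type*} (G : SimpleGraph W) (hG : G.IsTree)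
    (h : W → ℝ)
    (hedge : ∀ v w : W, G.Adj v w → h w = h v + 1 ∨ h w = h v - 1)
    (hup : ∀ v : W, {w : W | G.Adj v w ∧ h w = h v + 1}.ncard = 2)
    (hdown : ∀ v : W, {w : W | G.Adj v w ∧ h w = h v - 1}.ncard = 2)
    (β : ℝ) (hβ0 : 0 < β) (hβ1 : β ≤ 1) (w₀ : W) :
    ∃ r : ℤ → W, Function.Injective r ∧ (∀ n : ℤ, G.Adj (r n) (r (n + 1))) ∧
      (∃ n : ℤ, r n = w₀) ∧
      ∀ m n : ℤ, abs (|h (r m) - h (r n)| - β * |(m : ℝ) - (n : ℝ)|) ≤ 2 := by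
  classical
  set c : ℝ := (1 + β) / 2 with hc_def
  have h2c : 2 * c - 1 = β := by rw [hc_def]; ring
  have hc0 : 0 ≤ c := by rw [hc_def]; linarith
  have hc1 : c ≤ 1 := by rw [hc_def]; linarith
  set S : ℤ → ℤ := fun n => 2 * ⌊(n : ℝ) * c⌋ - n with hS_def
  have hS0 : S 0 = 0 := by simp [hS_def]
  have hSstep : ∀ n : ℤ, S (n + 1) - S n = 1 ∨ S (n + 1) - S n = -1 := by
    intro n
    have hmono : ⌊(n : ℝ) * c⌋ ≤ ⌊((n : ℝ) + 1) * c⌋ := Int.floor_mono (by nlinarith)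
    have hub : ⌊((n : ℝ) + 1) * c⌋ ≤ ⌊(n : ℝ) * c⌋ + 1 := by
      have h1 : ((n : ℝ) + 1) * c ≤ (n : ℝ) * c + 1 := by nlinarith
      calc ⌊((n : ℝ) + 1) * c⌋ ≤ ⌊(n : ℝ) * c + 1⌋ := Int.floor_mono h1
        _ = ⌊(n : ℝ) * c⌋ + 1 := by rw [Int.floor_add_one]
    simp only [hS_def]
    push_cast
    set A := ⌊(n : ℝ) * c⌋
    set B := ⌊((n : ℝ) + 1) * c⌋
    omega
  have hSstep' : ∀ n : ℤ, S (n - 1) - S n = 1 ∨ S (n - 1) - S n = -1 := by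
    intro n
    have := hSstep (n - 1)
    rw [sub_add_cancel] at this
    omega
  have hSbound : ∀ n : ℤ, β * n - 2 < (S n : ℝ) ∧ (S n : ℝ) ≤ β * n := by
    intro n
    have h1 : ((⌊(n : ℝ) * c⌋ : ℤ) : ℝ) ≤ (n : ℝ) * c := Int.floor_le _
    have h2 : (n : ℝ) * c - 1 < ((⌊(n : ℝ) * c⌋ : ℤ) : ℝ) := Int.sub_one_lt_floor _
    have h3 : 2 * ((n : ℝ) * c) - n = β * n := by rw [← h2c]; ring
    constructor
    · simp only [hS_def]; push_cast; linarith
    · simp only [hS_def]; push_cast; linarith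
  -- choice of next vertex
  have hnext : ∀ v p : W, ∀ s : ℤ, ∃ w : W,
      (s = 1 ∨ s = -1) → (G.Adj v w ∧ h w = h v + (s : ℝ) ∧ w ≠ p) := by
    intro v p s
    by_cases hs : s = 1 ∨ s = -1
    · rcases hs with rfl | rfl
      · obtain ⟨a, b, hab, hset⟩ := Set.ncard_eq_two.mp (hup v)
        have ha : G.Adj v a ∧ h a = h v + 1 := by
          have : a ∈ {w : W | G.Adj v w ∧ h w = h v + 1} := by rw [hset]; left; rfl
          exact this
        have hb : G.Adj v b ∧ h b = h v + 1 := by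
          have : b ∈ {w : W | G.Adj v w ∧ h w = h v + 1} := by rw [hset]; right; rfl
          exact this
        by_cases hap : a = p
        · exact ⟨b, fun _ => ⟨hb.1, by push_cast; exact hb.2, by rw [← hap]; exact hab.symm⟩⟩
        · exact ⟨a, fun _ => ⟨ha.1, by push_cast; exact ha.2, hap⟩⟩
      · obtain ⟨a, b, hab, hset⟩ := Set.ncard_eq_two.mp (hdown v)
        have ha : G.Adj v a ∧ h a = h v - 1 := by
          have : a ∈ {w : W | G.Adj v w ∧ h w = h v - 1} := by rw [hset]; left; rfl
          exact this
        have hb : G.Adj v b ∧ h b = h v - 1 := by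
          have : b ∈ {w : W | G.Adj v w ∧ h w = h v - 1} := by rw [hset]; right; rfl
          exact this
        by_cases hap : a = p
        · refine ⟨b, fun _ => ⟨hb.1, ?_, by rw [← hap]; exact hab.symm⟩⟩
          push_cast; rw [hb.2]; ring
        · refine ⟨a, fun _ => ⟨ha.1, ?_, hap⟩⟩
          push_cast; rw [ha.2]; ring
    · exact ⟨v, fun hc => absurd hc hs⟩
  choose nxt hnxt using hnext
  -- forward sequence
  set F : ℕ → W × W := fun k => Nat.rec (motive := fun _ => W × W)
    (w₀, nxt w₀ w₀ (S 1 - S 0))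
    (fun k ih => (ih.2, nxt ih.2 ih.1 (S ((k : ℤ) + 2) - S ((k : ℤ) + 1)))) k with hF_def
  have hF0 : (F 0).1 = w₀ := rfl
  have hF1 : ∀ k : ℕ, (F (k + 1)).1 = (F k).2 := fun k => rfl
  have hFspec : ∀ k : ℕ, G.Adj (F k).1 (F k).2 ∧
      h (F k).2 = h (F k).1 + ((S ((k : ℤ) + 1) - S (k : ℤ) : ℤ) : ℝ) := by
    intro k
    cases k with
    | zero =>
      have hcond : S 1 - S 0 = 1 ∨ S 1 - S 0 = -1 := by
        have := hSstep 0; norm_num at this; omega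
      have := hnxt w₀ w₀ (S 1 - S 0) hcond
      refine ⟨this.1, ?_⟩
      simp only [Nat.cast_zero, zero_add]
      exact this.2.1
    | succ k =>
      have hcond : S ((k : ℤ) + 2) - S ((k : ℤ) + 1) = 1 ∨
          S ((k : ℤ) + 2) - S ((k : ℤ) + 1) = -1 := by
        have := hSstep ((k : ℤ) + 1)
        rw [show (k : ℤ) + 1 + 1 = (k : ℤ) + 2 from by ring] at this; omega
      have := hnxt (F k).2 (F k).1 (S ((k : ℤ) + 2) - S ((k : ℤ) + 1)) hcond
      refine ⟨this.1, ?_⟩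
      have e1 : ((k + 1 : ℕ) : ℤ) + 1 = (k : ℤ) + 2 := by push_cast; ring
      have e2 : ((k + 1 : ℕ) : ℤ) = (k : ℤ) + 1 := by push_cast; ring
      rw [e1, e2]
      exact this.2.1
  have hFnb : ∀ k : ℕ, (F (k + 1)).2 ≠ (F k).1 := by
    intro k
    have hcond : S ((k : ℤ) + 2) - S ((k : ℤ) + 1) = 1 ∨
        S ((k : ℤ) + 2) - S ((k : ℤ) + 1) = -1 := by
      have := hSstep ((k : ℤ) + 1)
      rw [show (k : ℤ) + 1 + 1 = (k : ℤ) + 2 from by ring] at this; omega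
    exact (hnxt (F k).2 (F k).1 _ hcond).2.2
  have hFh : ∀ k : ℕ, h (F k).1 = h w₀ + ((S (k : ℤ) : ℤ) : ℝ) := by
    intro k
    induction k with
    | zero => simp [hF0, hS0]
    | succ k ih =>
      have := (hFspec k).2
      rw [hF1 k, this, ih]
      have e2 : ((k + 1 : ℕ) : ℤ) = (k : ℤ) + 1 := by push_cast; ring
      rw [e2]; push_cast; ring
  -- backward sequence
  set B : ℕ → W × W := fun k => Nat.rec (motive := fun _ => W × W)
    (w₀, (F 0).2)
    (fun k ih => (nxt ih.1 ih.2 (S (-(k : ℤ) - 1) - S (-(k : ℤ))), ih.1)) k with hB_def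
  have hB0 : (B 0).1 = w₀ := rfl
  have hB02 : (B 0).2 = (F 0).2 := rfl
  have hB2 : ∀ k : ℕ, (B (k + 1)).2 = (B k).1 := fun k => rfl
  have hBspec : ∀ k : ℕ, G.Adj (B k).1 (B (k + 1)).1 ∧
      h (B (k + 1)).1 = h (B k).1 + ((S (-(k : ℤ) - 1) - S (-(k : ℤ)) : ℤ) : ℝ) ∧
      (B (k + 1)).1 ≠ (B k).2 := by
    intro k
    have hcond := hSstep' (-(k : ℤ))
    exact hnxt (B k).1 (B k).2 _ hcond
  have hBh : ∀ k : ℕ, h (B k).1 = h w₀ + ((S (-(k : ℤ)) : ℤ) : ℝ) := by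
    intro k
    induction k with
    | zero => simp [hB0, hS0]
    | succ k ih =>
      have := (hBspec k).2.1
      rw [this, ih]
      have e2 : -((k + 1 : ℕ) : ℤ) = -(k : ℤ) - 1 := by push_cast; ring
      rw [e2]; push_cast; ring
  -- the line
  set r : ℤ → W := fun n => if 0 ≤ n then (F n.toNat).1 else (B (-n).toNat).1 with hr_def
  have hrF : ∀ k : ℕ, r (k : ℤ) = (F k).1 := by
    intro k
    simp only [hr_def, if_pos (Int.natCast_nonneg k), Int.toNat_natCast]
  have hrB : ∀ k : ℕ, r (-(k : ℤ)) = (B k).1 := by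
    intro k
    cases k with
    | zero => simpa using (hrF 0).trans (hF0.trans hB0.symm)
    | succ k =>
      have hneg : ¬ (0 ≤ -((k + 1 : ℕ) : ℤ)) := by push_cast; omega
      simp only [hr_def, if_neg hneg, neg_neg, Int.toNat_natCast]
  have hcase : ∀ n : ℤ, (∃ k : ℕ, n = (k : ℤ)) ∨ (∃ k : ℕ, n = -((k : ℤ) + 1)) := by
    intro n
    rcases le_or_gt 0 n with hn | hn
    · exact Or.inl ⟨n.toNat, (Int.toNat_of_nonneg hn).symm⟩
    · exact Or.inr ⟨(-n - 1).toNat, by omega⟩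
  have hh_r : ∀ n : ℤ, h (r n) = h w₀ + ((S n : ℤ) : ℝ) := by
    intro n
    rcases hcase n with ⟨k, rfl⟩ | ⟨k, rfl⟩
    · rw [hrF k]; exact hFh k
    · have e : -((k : ℤ) + 1) = -(((k + 1 : ℕ) : ℤ)) := by push_cast; ring
      rw [e, hrB (k + 1)]
      exact hBh (k + 1)
  have hadj_r : ∀ n : ℤ, G.Adj (r n) (r (n + 1)) := by
    intro n
    rcases hcase n with ⟨k, rfl⟩ | ⟨k, rfl⟩
    · have e : (k : ℤ) + 1 = ((k + 1 : ℕ) : ℤ) := by push_cast; ring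
      rw [hrF k, e, hrF (k + 1), hF1 k]
      exact (hFspec k).1
    · have e1 : -((k : ℤ) + 1) = -(((k + 1 : ℕ) : ℤ)) := by push_cast; ring
      have e2 : -((k : ℤ) + 1) + 1 = -((k : ℕ) : ℤ) := by push_cast; ring
      rw [e2, e1, hrB (k + 1), hrB k]
      exact (hBspec k).1.symm
  have hnb_r : ∀ n : ℤ, r (n + 2) ≠ r n := by
    intro n
    rcases hcase n with ⟨k, rfl⟩ | ⟨k, rfl⟩
    · have e : (k : ℤ) + 2 = ((k + 2 : ℕ) : ℤ) := by push_cast; ring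
      have hF12 : (F (k + 2)).1 = (F (k + 1)).2 := rfl
      rw [hrF k, e, hrF (k + 2), hF12]
      exact hFnb k
    · cases k with
      | zero =>
        have e1 : -((0 : ℕ) : ℤ) - 1 + 2 = ((1 : ℕ) : ℤ) := by norm_num
        have e1' : -(((0 : ℕ) : ℤ) + 1) + 2 = ((1 : ℕ) : ℤ) := by norm_num
        have e2 : -(((0 : ℕ) : ℤ) + 1) = -((1 : ℕ) : ℤ) := by norm_num
        rw [e1', e2, hrF 1, hrB 1]
        intro hc
        refine (hBspec 0).2.2 ?_
        show (B 1).1 = (B 0).2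
        rw [← hc]; rfl
      | succ k =>
        have e1 : -(((k + 1 : ℕ) : ℤ) + 1) + 2 = -((k : ℕ) : ℤ) := by push_cast; ring
        have e2 : -(((k + 1 : ℕ) : ℤ) + 1) = -((k + 2 : ℕ) : ℤ) := by push_cast; ring
        rw [e1, e2, hrB k, hrB (k + 2)]
        have := (hBspec (k + 1)).2.2
        rw [hB2 k] at this
        exact fun hc => this hc.symm
  refine ⟨r, tree_injective_of_nonback hG r hadj_r hnb_r, hadj_r, ⟨0, ?_⟩, ?_⟩
  · simpa using (hrF 0).trans hF0
  · intro m n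
    have hm := hSbound m
    have hn := hSbound n
    have hx : h (r m) - h (r n) = ((S m : ℤ) : ℝ) - ((S n : ℤ) : ℝ) := by
      rw [hh_r m, hh_r n]; ring
    have hxy : |(((S m : ℤ) : ℝ) - ((S n : ℤ) : ℝ)) - β * ((m : ℝ) - (n : ℝ))| ≤ 2 := by
      rw [abs_le]
      constructor <;> nlinarith [hm.1, hm.2, hn.1, hn.2]
    have hy : β * |(m : ℝ) - (n : ℝ)| = |β * ((m : ℝ) - (n : ℝ))| := by
      rw [abs_mul, abs_of_pos hβ0]
    rw [hx, hy]
    calc |(|((S m : ℤ) : ℝ) - ((S n : ℤ) : ℝ)| - |β * ((m : ℝ) - (n : ℝ))|)|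
        ≤ |(((S m : ℤ) : ℝ) - ((S n : ℤ) : ℝ)) - β * ((m : ℝ) - (n : ℝ))| :=
          abs_abs_sub_abs_le_abs_sub _ _
      _ ≤ 2 := hxy
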